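/- Suppose 𝒜ℐ₁ and 𝒜ℐ₂ are strongly non-conflating interpreted extended architectures (with compatible interpretations). If 𝒜ℐ₁ ⊑_r 𝒜ℐ₂ (r is a refinement mapping satisfying conditions T1–T3), then 𝒜ℐ₁ ≼_r 𝒜ℐ₂ (r is a semantic refinement mapping). -/
import Mathlib


structure Machine (S A D O : Type) where
  s0 : S
  step : S → A → S
  dom : A → D
  obs : D → S → O

namespace Machine

def run {S A D O : Type} (M : Machine S A D O) (α : List A) : S :=
  α.foldl M.step M.s0

end Machine
/-- An extended architecture: `edge u v = none` means no edge, `edge u v = some none`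
means an edge labelled `⊤`, and `edge u v = some (some f)` means an edge labelled by
the filter-function name `f`.  There is at most one label per ordered pair by
construction, and the relation is reflexive with label `⊤`. -/
structure ExtArch (D L : Type) where
  edge : D → D → Option (Option L)
  refl : ∀ u, edge u u = some none

/-- Values of the `tf` function and of filter-function interpretations:
`eps` is the empty value ε, `base v` an arbitrary basic value, and
`pair σ a` the pair `(σ, a)` of a `tf` value and an action. -/
inductive TFVal (A V : Type) where
  | eps : TFVal A V
  | base : V → TFVal A V
  | pair : List (TFVal A V) → A → TFVal A V

/-- `σ ⌢ x`: appends `x` as a single new last element unless `x = ε`. -/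
def snoc' {A V : Type} (σ : List (TFVal A V)) : TFVal A V → List (TFVal A V)
  | .eps => σ
  | x => σ ++ [x]

/-- `tf`, computed on the reversed action sequence. -/
def tfR {A D L V : Type} (Arch : ExtArch D L) (dm : A → D)
    (I : L → List A → A → TFVal A V) : List A → D → List (TFVal A V)
  | [], _ => []
  | a :: ρ, u =>
    match Arch.edge (dm a) u with
    | none => tfR Arch dm I ρ u
    | some none => tfR Arch dm I ρ u ++ [TFVal.pair (tfR Arch dm I ρ (dm a)) a]
    | some (some f) => snoc' (tfR Arch dm I ρ u) (I f ρ.reverse a)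

/-- `tf Arch dm I α u` : maximal information domain `u` is permitted to have after `α`. -/
def tf {A D L V : Type} (Arch : ExtArch D L) (dm : A → D)
    (I : L → List A → A → TFVal A V) (α : List A) (u : D) : List (TFVal A V) :=
  tfR Arch dm I α.reverse u

/-- `inF Arch dm I α a u` : the information `in_{dom(a),u}(α, a)` transmitted to `u`
when action `a` is performed after `α`. -/
def inF {A D L V : Type} (Arch : ExtArch D L) (dm : A → D)
    (I : L → List A → A → TFVal A V) (α : List A) (a : A) (u : D) : TFVal A V :=
  match Arch.edge (dm a) u with
  | none => TFVal.eps
  | some none => TFVal.pair (tf Arch dm I α (dm a)) a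
  | some (some f) => I f α a
/-- A strongly non-conflating interpreted architecture. -/
def StronglyNonConflating {A D L V : Type} (Arch : ExtArch D L) (dm : A → D)
    (I : L → List A → A → TFVal A V) : Prop :=
  ∀ (u v w : D) (f : L), Arch.edge u w = some (some f) → Arch.edge v w = some none →
    ∀ (a b : A), dm a = u → dm b = v →
      ∀ (α β : List A), I f α a ≠ TFVal.pair (tf Arch dm I β v) b

/-- A compatible interpretation: `𝕀(f)` is `tf_u`-compatible for every edge
`u ↝_f v` with `f ∈ L`. -/
def Compatible {A D L V : Type} (Arch : ExtArch D L) (dm : A → D)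
    (I : L → List A → A → TFVal A V) : Prop :=
  ∀ (u v : D) (f : L), Arch.edge u v = some (some f) →
    ∀ (α β : List A), tf Arch dm I α u = tf Arch dm I β u →
      ∀ (a : A), dm a = u → I f α a = I f β a
/-- `r` is a semantic refinement mapping from `(A₁, dm₁, I₁)` to `(A₂, dm₂, I₂)`. -/
def SemRef {A D₁ D₂ L₁ L₂ V₁ V₂ : Type} (A₁ : ExtArch D₁ L₁) (dm₁ : A → D₁)
    (I₁ : L₁ → List A → A → TFVal A V₁) (A₂ : ExtArch D₂ L₂) (dm₂ : A → D₂)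
    (I₂ : L₂ → List A → A → TFVal A V₂) (r : D₁ → D₂) : Prop :=
  Function.Surjective r ∧ dm₂ = r ∘ dm₁ ∧
    ∀ (u : D₁) (α β : List A),
      tf A₂ dm₂ I₂ α (r u) = tf A₂ dm₂ I₂ β (r u) →
        tf A₁ dm₁ I₁ α u = tf A₁ dm₁ I₁ β u
/-- `r` is a refinement mapping from `(A₁, dm₁, I₁)` to `(A₂, dm₂, I₂)`,
i.e. conditions T1–T3 hold. -/
def TRef {A D₁ D₂ L₁ L₂ V₁ V₂ : Type} (A₁ : ExtArch D₁ L₁) (dm₁ : A → D₁)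
    (I₁ : L₁ → List A → A → TFVal A V₁) (A₂ : ExtArch D₂ L₂) (dm₂ : A → D₂)
    (I₂ : L₂ → List A → A → TFVal A V₂) (r : D₁ → D₂) : Prop :=
  -- T1
  (Function.Surjective r ∧ dm₂ = r ∘ dm₁) ∧
  -- T2
  (∀ (u v : D₁) (α : List A) (a : A), dm₁ a = u →
    inF A₂ dm₂ I₂ α a (r v) = TFVal.eps → inF A₁ dm₁ I₁ α a v = TFVal.eps) ∧
  -- T3
  (∀ (v : D₁) (α β : List A) (a b : A),
    inF A₂ dm₂ I₂ α a (r v) = inF A₂ dm₂ I₂ β b (r v) →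
    inF A₂ dm₂ I₂ α a (r v) ≠ TFVal.eps →
    (a = b ∧ A₂.edge (dm₂ a) (r v) = some none) ∨
      inF A₁ dm₁ I₁ α a v = inF A₁ dm₁ I₁ β b v)

lemma snoc'_eps {A V : Type} (σ : List (TFVal A V)) : snoc' σ TFVal.eps = σ := rfl

lemma snoc'_ne {A V : Type} (σ : List (TFVal A V)) {x : TFVal A V} (h : x ≠ TFVal.eps) :
    snoc' σ x = σ ++ [x] := by cases x <;> simp_all [snoc']

lemma tfR_cons {A D L V : Type} (Arch : ExtArch D L) (dm : A → D)
    (I : L → List A → A → TFVal A V) (a : A) (ρ : List A) (u : D) :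
    tfR Arch dm I (a :: ρ) u = snoc' (tfR Arch dm I ρ u) (inF Arch dm I ρ.reverse a u) := by
  cases h : Arch.edge (dm a) u <;>
    simp [tfR, inF, tf, h, snoc', List.reverse_reverse]
  case some o => cases o <;> simp [tfR, inF, tf, h, snoc', List.reverse_reverse]

lemma key_lemma {A D₁ D₂ L₁ L₂ V₁ V₂ : Type}
    (A₁ : ExtArch D₁ L₁) (dm₁ : A → D₁) (I₁ : L₁ → List A → A → TFVal A V₁)
    (A₂ : ExtArch D₂ L₂) (dm₂ : A → D₂) (I₂ : L₂ → List A → A → TFVal A V₂)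
    (r : D₁ → D₂)
    (hc₁ : Compatible A₁ dm₁ I₁)
    (hdm : dm₂ = r ∘ dm₁)
    (hT2 : ∀ (u v : D₁) (α : List A) (a : A), dm₁ a = u →
      inF A₂ dm₂ I₂ α a (r v) = TFVal.eps → inF A₁ dm₁ I₁ α a v = TFVal.eps)
    (hT3 : ∀ (v : D₁) (α β : List A) (a b : A),
      inF A₂ dm₂ I₂ α a (r v) = inF A₂ dm₂ I₂ β b (r v) →
      inF A₂ dm₂ I₂ α a (r v) ≠ TFVal.eps →
      (a = b ∧ A₂.edge (dm₂ a) (r v) = some none) ∨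
        inF A₁ dm₁ I₁ α a v = inF A₁ dm₁ I₁ β b v) :
    ∀ (n : ℕ) (ρ σ : List A) (u : D₁), ρ.length + σ.length ≤ n →
      tfR A₂ dm₂ I₂ ρ (r u) = tfR A₂ dm₂ I₂ σ (r u) →
      tfR A₁ dm₁ I₁ ρ u = tfR A₁ dm₁ I₁ σ u := by
  intro n
  induction n with
  | zero =>
    intro ρ σ u hlen _
    cases ρ <;> cases σ <;> simp_all
  | succ n ih =>
    intro ρ σ u hlen heq
    cases ρ with
    | nil =>
      cases σ with
      | nil => rfl
      | cons b σ' =>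
        rw [tfR_cons] at heq
        by_cases hb : inF A₂ dm₂ I₂ σ'.reverse b (r u) = TFVal.eps
        · rw [hb, snoc'_eps] at heq
          rw [tfR_cons, hT2 (dm₁ b) u σ'.reverse b rfl hb, snoc'_eps]
          exact ih [] σ' u (by simp only [List.length_nil, List.length_cons] at hlen ⊢; omega) heq
        · rw [snoc'_ne _ hb] at heq
          simp [tfR] at heq
    | cons a ρ' =>
      cases σ with
      | nil =>
        rw [tfR_cons] at heq
        by_cases ha : inF A₂ dm₂ I₂ ρ'.reverse a (r u) = TFVal.eps
        · rw [ha, snoc'_eps] at heq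
          rw [tfR_cons, hT2 (dm₁ a) u ρ'.reverse a rfl ha, snoc'_eps]
          exact ih ρ' [] u (by simp only [List.length_nil, List.length_cons] at hlen ⊢; omega) heq
        · rw [snoc'_ne _ ha] at heq
          simp [tfR] at heq
      | cons b σ' =>
        rw [tfR_cons, tfR_cons] at heq
        by_cases ha : inF A₂ dm₂ I₂ ρ'.reverse a (r u) = TFVal.eps
        · rw [ha, snoc'_eps, ← tfR_cons] at heq
          rw [tfR_cons, hT2 (dm₁ a) u ρ'.reverse a rfl ha, snoc'_eps]
          exact ih ρ' (b :: σ') u (by simp only [List.length_nil, List.length_cons] at hlen ⊢; omega) heq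
        · by_cases hb : inF A₂ dm₂ I₂ σ'.reverse b (r u) = TFVal.eps
          · rw [hb, snoc'_eps, ← tfR_cons] at heq
            conv_rhs => rw [tfR_cons, hT2 (dm₁ b) u σ'.reverse b rfl hb, snoc'_eps]
            exact ih (a :: ρ') σ' u (by simp only [List.length_nil, List.length_cons] at hlen ⊢; omega) heq
          · rw [snoc'_ne _ ha, snoc'_ne _ hb] at heq
            obtain ⟨h1, h2⟩ := List.append_inj' heq rfl
            have hxy : inF A₂ dm₂ I₂ ρ'.reverse a (r u)
                = inF A₂ dm₂ I₂ σ'.reverse b (r u) := by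
              simpa using h2
            have hIH : tfR A₁ dm₁ I₁ ρ' u = tfR A₁ dm₁ I₁ σ' u :=
              ih ρ' σ' u (by simp only [List.length_nil, List.length_cons] at hlen ⊢; omega) h1
            rcases hT3 u ρ'.reverse σ'.reverse a b hxy ha with ⟨hab, hedge⟩ | hin
            · subst hab
              have hlist : tfR A₂ dm₂ I₂ ρ' (dm₂ a) = tfR A₂ dm₂ I₂ σ' (dm₂ a) := by
                simp only [inF, hedge, tf, List.reverse_reverse] at hxy
                exact (TFVal.pair.injEq _ _ _ _).mp hxy |>.1
              have hda : dm₂ a = r (dm₁ a) := by rw [hdm]; rfl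
              have hD : tfR A₁ dm₁ I₁ ρ' (dm₁ a) = tfR A₁ dm₁ I₁ σ' (dm₁ a) :=
                ih ρ' σ' (dm₁ a) (by simp only [List.length_nil, List.length_cons] at hlen ⊢; omega) (by rw [← hda]; exact hlist)
              have hin₁ : inF A₁ dm₁ I₁ ρ'.reverse a u = inF A₁ dm₁ I₁ σ'.reverse a u := by
                cases he : A₁.edge (dm₁ a) u with
                | none => simp [inF, he]
                | some o =>
                  cases o with
                  | none => simp [inF, he, tf, List.reverse_reverse, hD]
                  | some f =>
                    simp only [inF, he]
                    exact hc₁ (dm₁ a) u f he ρ'.reverse σ'.reverse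
                      (by simpa [tf, List.reverse_reverse] using hD) a rfl
              rw [tfR_cons, tfR_cons, hIH, hin₁]
            · rw [tfR_cons, tfR_cons, hIH, hin]

/-- for strongly non-conflating interpreted architectures (with
compatible interpretations), a refinement mapping (T1–T3) is a semantic
refinement mapping. -/
theorem statement15 {A D₁ D₂ L₁ L₂ V₁ V₂ : Type}
    (A₁ : ExtArch D₁ L₁) (dm₁ : A → D₁) (I₁ : L₁ → List A → A → TFVal A V₁)
    (A₂ : ExtArch D₂ L₂) (dm₂ : A → D₂) (I₂ : L₂ → List A → A → TFVal A V₂)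
    (r : D₁ → D₂)
    (hc₁ : Compatible A₁ dm₁ I₁) (hc₂ : Compatible A₂ dm₂ I₂)
    (hs₁ : StronglyNonConflating A₁ dm₁ I₁)
    (hs₂ : StronglyNonConflating A₂ dm₂ I₂)
    (hT : TRef A₁ dm₁ I₁ A₂ dm₂ I₂ r) :
    SemRef A₁ dm₁ I₁ A₂ dm₂ I₂ r := by
  obtain ⟨⟨hsurj, hdm⟩, hT2, hT3⟩ := hT
  refine ⟨hsurj, hdm, fun u α β h => ?_⟩
  exact key_lemma A₁ dm₁ I₁ A₂ dm₂ I₂ r hc₁ hdm hT2 hT3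
    (α.length + β.length) α.reverse β.reverse u (by simp) h
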